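/- Let α, β, γ, σ be integers with β ≥ γ > σ ≥ 0, α + σ ≥ 2γ, α + β + σ > 3, and γ = β, and let G be the group presented by ⟨a,b | a^(2^α) = b^(2^β) = [a,b,a] = [a,b,b] = e, a^(2^(α+σ-γ)) = [a,b]^(2^σ)⟩ (general type). Then G is capable if and only if α = β + 1 and σ = β - 1. -/

import Mathlib

/-- The paper's commutator convention: `[x,y] = x⁻¹y⁻¹xy`. -/
def pcomm {G : Type*} [Group G] (x y : G) : G := x⁻¹ * y⁻¹ * x * y

/-- A group is capable if it is isomorphic to `K/Z(K)` for some group `K`. -/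
def IsCapable (G : Type*) [Group G] : Prop :=
  ∃ (K : Type) (_ : Group K), Nonempty ((K ⧸ Subgroup.center K) ≃* G)

/-- Relators of the type (ii) (general type) presentation
`⟨a,b | a^(2^α) = b^(2^β) = [a,b,a] = [a,b,b] = e, a^(2^(α+σ-γ)) = [a,b]^(2^σ)⟩`. -/
def relsII (α β γ σ : ℕ) : Set (FreeGroup (Fin 2)) :=
  let a : FreeGroup (Fin 2) := FreeGroup.of 0
  let b : FreeGroup (Fin 2) := FreeGroup.of 1
  {a ^ 2 ^ α, b ^ 2 ^ β, pcomm (pcomm a b) a, pcomm (pcomm a b) b,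
    a ^ 2 ^ (α + σ - γ) * (pcomm a b ^ 2 ^ σ)⁻¹}


namespace CapProof

section PcommBasic

variable {G H : Type*} [Group G] [Group H]

lemma map_pcomm (f : G →* H) (x y : G) : f (pcomm x y) = pcomm (f x) (f y) := by
  simp [pcomm]

lemma pcomm_inv_eq (x y : G) : (pcomm x y)⁻¹ = pcomm y x := by
  simp [pcomm]; group

lemma mul_pcomm (x y : G) : x * y = y * x * pcomm x y := by
  simp [pcomm]; group

lemma pcomm_eq_one_iff {x y : G} : pcomm x y = 1 ↔ x * y = y * x := by
  constructor
  · intro h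
    have := mul_pcomm x y
    rw [h, mul_one] at this
    exact this
  · intro h
    have h2 : pcomm x y = (y * x)⁻¹ * (x * y) := by simp [pcomm]; group
    rw [h2, h]
    group

lemma pcomm_mul_left (u v w : G) :
    pcomm (u * v) w = v⁻¹ * pcomm u w * v * pcomm v w := by
  simp [pcomm]; group

lemma pcomm_mul_right (u v w : G) :
    pcomm u (v * w) = pcomm u w * (w⁻¹ * pcomm u v * w) := by
  simp [pcomm]; group

lemma conj_eq_mul_pcomm (u v : G) : v⁻¹ * u * v = u * pcomm u v := by
  simp [pcomm]; group

lemma pcomm_eq_of_mul_eq {u v δ : G} (h : u * v = v * u * δ) : pcomm u v = δ := by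
  have : pcomm u v = u⁻¹ * v⁻¹ * (u * v) := by simp [pcomm]; group
  rw [this, h]; group

end PcommBasic

section PowerLemmas

variable {G : Type*} [Group G]

/-- Unconditional: `A⁻¹ * B * A = B * (pcomm A B)⁻¹`. -/
lemma conj_base (A B : G) : A⁻¹ * B * A = B * (pcomm A B)⁻¹ := by
  simp [pcomm]; group

lemma conj_zpow_eq (A B : G) (j : ℤ) :
    A⁻¹ * B ^ j * A = (A⁻¹ * B * A) ^ j := by
  simpa using (conj_zpow (i := j) (a := A⁻¹) (b := B)).symm

lemma conj_zpow_comm (A B : G) (h : Commute (pcomm A B) B) (j : ℤ) :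
    A⁻¹ * B ^ j * A = B ^ j * ((pcomm A B)⁻¹) ^ j := by
  rw [conj_zpow_eq, conj_base, (h.symm.inv_right).mul_zpow]

/-- `[A, B^n] = [A,B]^n` when `[A,B]` commutes with `B`. -/
lemma pcomm_zpow_right (A B : G) (h : Commute (pcomm A B) B) (n : ℤ) :
    pcomm A (B ^ n) = (pcomm A B) ^ n := by
  have h1 : pcomm A (B ^ n) = (A⁻¹ * B ^ (-n) * A) * B ^ n := by
    simp only [pcomm]; group
  rw [h1, conj_zpow_comm A B h, zpow_neg, zpow_neg, inv_zpow, inv_inv]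
  have h2 : Commute (B ^ n) ((pcomm A B) ^ n) := h.symm.zpow_zpow n n
  rw [mul_assoc, ← h2.eq]
  group

/-- `[A^n, B] = [A,B]^n` when `[A,B]` commutes with `A`. -/
lemma pcomm_zpow_left (A B : G) (h : Commute (pcomm A B) A) (n : ℤ) :
    pcomm (A ^ n) B = (pcomm A B) ^ n := by
  have h' : Commute (pcomm B A) A := by
    rw [← pcomm_inv_eq]; exact h.inv_left
  have h1 : B⁻¹ * A ^ n * B = A ^ n * ((pcomm B A)⁻¹) ^ n := conj_zpow_comm B A h' n
  have h2 : pcomm (A ^ n) B = (A ^ n)⁻¹ * (B⁻¹ * A ^ n * B) := by simp [pcomm]; group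
  rw [h2, h1, pcomm_inv_eq]
  group

lemma pcomm_pow_right (A B : G) (h : Commute (pcomm A B) B) (n : ℕ) :
    pcomm A (B ^ n) = (pcomm A B) ^ n := by
  have := pcomm_zpow_right A B h (n : ℤ)
  simpa [zpow_natCast] using this

lemma pcomm_pow_left (A B : G) (h : Commute (pcomm A B) A) (n : ℕ) :
    pcomm (A ^ n) B = (pcomm A B) ^ n := by
  have := pcomm_zpow_left A B h (n : ℤ)
  simpa [zpow_natCast] using this

/-- swap: `B^j * A^i = A^i * B^j * [A,B]^(-(i*j))` in a "class 2" situation. -/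
lemma swap_zpow (A B : G) (hA : Commute (pcomm A B) A) (hB : Commute (pcomm A B) B)
    (i j : ℤ) : B ^ j * A ^ i = A ^ i * B ^ j * (pcomm A B) ^ (-(i * j)) := by
  have hC : Commute (pcomm (A ^ i) B) B := by
    rw [pcomm_zpow_left A B hA i]; exact hB.zpow_left i
  have h1 : (A ^ i)⁻¹ * B ^ j * A ^ i = B ^ j * ((pcomm (A ^ i) B)⁻¹) ^ j :=
    conj_zpow_comm (A ^ i) B hC j
  rw [pcomm_zpow_left A B hA i] at h1
  have h2 : B ^ j * A ^ i = A ^ i * ((A ^ i)⁻¹ * B ^ j * A ^ i) := by group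
  rw [h2, h1, inv_zpow, ← zpow_mul, ← zpow_neg, ← mul_assoc]

end PowerLemmas
section Hall

variable {G : Type*} [Group G]

lemma choose_two_succ (n : ℕ) : (n + 1).choose 2 = n.choose 2 + n := by
  rw [Nat.choose_succ_succ]
  simp [Nat.choose_one_right]
  omega

/-- `[x^n, y] = z^n * [z,x]^(n choose 2)` when `[z,x]` is central, `z = [x,y]`. -/
lemma hall_left (x y : G) (h1 : ∀ g : G, Commute (pcomm (pcomm x y) x) g) (n : ℕ) :
    pcomm (x ^ n) y = (pcomm x y) ^ n * (pcomm (pcomm x y) x) ^ (n.choose 2) := by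
  set z := pcomm x y with hz
  set z1 := pcomm z x with hz1
  induction n with
  | zero => simp [pcomm]
  | succ n ih =>
    rw [pow_succ, pcomm_mul_left, ih, ← hz]
    have e1 : x⁻¹ * (z ^ n * z1 ^ n.choose 2) * x * z
        = (x⁻¹ * z ^ n * x) * (x⁻¹ * z1 ^ n.choose 2 * x) * z := by group
    rw [e1]
    have e2 : x⁻¹ * z ^ n * x = (x⁻¹ * z * x) ^ n := by
      simpa using (conj_pow (i := n) (a := x⁻¹) (b := z)).symm
    have e3 : x⁻¹ * z * x = z * z1 := conj_eq_mul_pcomm z x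
    have e4 : x⁻¹ * z1 ^ n.choose 2 * x = z1 ^ n.choose 2 := by
      have hcm : Commute (z1 ^ n.choose 2) x := (h1 x).pow_left _
      rw [mul_assoc, hcm.eq]; group
    have e5 : (z * z1) ^ n = z ^ n * z1 ^ n := (h1 z).symm.mul_pow n
    rw [e2, e3, e4, e5, choose_two_succ]
    have c1 : Commute (z1 ^ n * z1 ^ n.choose 2) z := ((h1 z).pow_left n).mul_left
      ((h1 z).pow_left _)
    calc z ^ n * z1 ^ n * z1 ^ n.choose 2 * z
        = z ^ n * (z1 ^ n * z1 ^ n.choose 2 * z) := by group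
      _ = z ^ n * (z * (z1 ^ n * z1 ^ n.choose 2)) := by rw [c1.eq]
      _ = z ^ (n + 1) * z1 ^ (n.choose 2 + n) := by
          rw [← mul_assoc, ← pow_succ, ← pow_add, Nat.add_comm n (n.choose 2)]

/-- `[x, y^n] = z^n * [z,y]^(n choose 2)` when `[z,y]` is central, `z = [x,y]`. -/
lemma hall_right (x y : G) (h2 : ∀ g : G, Commute (pcomm (pcomm x y) y) g) (n : ℕ) :
    pcomm x (y ^ n) = (pcomm x y) ^ n * (pcomm (pcomm x y) y) ^ (n.choose 2) := by
  set z := pcomm x y with hz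
  set z2 := pcomm z y with hz2
  induction n with
  | zero => simp [pcomm]
  | succ n ih =>
    rw [pow_succ, pcomm_mul_right, ih, ← hz]
    have e2 : y⁻¹ * (z ^ n * z2 ^ n.choose 2) * y = (y⁻¹ * z ^ n * y) * z2 ^ n.choose 2 := by
      have hcm : Commute (z2 ^ n.choose 2) y := (h2 y).pow_left _
      calc y⁻¹ * (z ^ n * z2 ^ n.choose 2) * y = (y⁻¹ * z ^ n) * (z2 ^ n.choose 2 * y) := by group
        _ = (y⁻¹ * z ^ n) * (y * z2 ^ n.choose 2) := by rw [hcm.eq]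
        _ = (y⁻¹ * z ^ n * y) * z2 ^ n.choose 2 := by group
    have e3 : y⁻¹ * z ^ n * y = (y⁻¹ * z * y) ^ n := by
      simpa using (conj_pow (i := n) (a := y⁻¹) (b := z)).symm
    have e4 : y⁻¹ * z * y = z * z2 := conj_eq_mul_pcomm z y
    have e5 : (z * z2) ^ n = z ^ n * z2 ^ n := (h2 z).symm.mul_pow n
    rw [e2, e3, e4, e5, choose_two_succ]
    calc z * (z ^ n * z2 ^ n * z2 ^ n.choose 2)
        = (z * z ^ n) * (z2 ^ n * z2 ^ n.choose 2) := by group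
      _ = z ^ (n + 1) * z2 ^ (n.choose 2 + n) := by
          rw [← pow_succ', ← pow_add, Nat.add_comm n (n.choose 2)]

end Hall
section Heisenberg

/-- The integral Heisenberg group: `(i,j,k) ~ a^i b^j c^k`, `c = [a,b]` central. -/
@[ext]
structure Heis where
  i : ℤ
  j : ℤ
  k : ℤ

namespace Heis

instance : Mul Heis := ⟨fun g h => ⟨g.i + h.i, g.j + h.j, g.k + h.k - g.j * h.i⟩⟩
instance : One Heis := ⟨⟨0, 0, 0⟩⟩
instance : Inv Heis := ⟨fun g => ⟨-g.i, -g.j, -g.k - g.j * g.i⟩⟩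

@[simp] lemma mul_i (g h : Heis) : (g * h).i = g.i + h.i := rfl
@[simp] lemma mul_j (g h : Heis) : (g * h).j = g.j + h.j := rfl
@[simp] lemma mul_k (g h : Heis) : (g * h).k = g.k + h.k - g.j * h.i := rfl
@[simp] lemma one_i : (1 : Heis).i = 0 := rfl
@[simp] lemma one_j : (1 : Heis).j = 0 := rfl
@[simp] lemma one_k : (1 : Heis).k = 0 := rfl
@[simp] lemma inv_i (g : Heis) : g⁻¹.i = -g.i := rfl
@[simp] lemma inv_j (g : Heis) : g⁻¹.j = -g.j := rfl
@[simp] lemma inv_k (g : Heis) : g⁻¹.k = -g.k - g.j * g.i := rfl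

instance : Group Heis where
  mul_assoc g h f := by ext <;> simp <;> ring
  one_mul g := by ext <;> simp
  mul_one g := by ext <;> simp
  inv_mul_cancel g := by ext <;> simp <;> ring

def A : Heis := ⟨1, 0, 0⟩
def B : Heis := ⟨0, 1, 0⟩

lemma A_pow (n : ℕ) : A ^ n = ⟨n, 0, 0⟩ := by
  induction n with
  | zero => rfl
  | succ n ih => rw [pow_succ, ih]; ext <;> simp [A]

lemma B_pow (n : ℕ) : B ^ n = ⟨0, n, 0⟩ := by
  induction n with
  | zero => rfl
  | succ n ih => rw [pow_succ, ih]; ext <;> simp [B]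

lemma pcomm_AB : pcomm A B = ⟨0, 0, 1⟩ := by
  ext <;> simp [pcomm, A, B]

lemma pcomm_AB_pow (n : ℕ) : pcomm A B ^ n = ⟨0, 0, n⟩ := by
  rw [pcomm_AB]
  induction n with
  | zero => rfl
  | succ n ih => rw [pow_succ, ih]; ext <;> simp

lemma pcomm_AB_A : pcomm (pcomm A B) A = 1 := by
  ext <;> simp [pcomm, A, B] <;> ring

lemma pcomm_AB_B : pcomm (pcomm A B) B = 1 := by
  ext <;> simp [pcomm, A, B] <;> ring

/-- The normal subgroup `M`: `b` plays the role of β, `s` of σ, `β+t` of `α+σ-β`. -/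
def M (b s t : ℕ) : Subgroup Heis where
  carrier := {g | (2 : ℤ) ^ (b + t) ∣ g.i ∧ (2 : ℤ) ^ b ∣ g.j ∧
    (2 : ℤ) ^ b * 2 ^ (b + t) ∣ g.k * 2 ^ (b + t) + 2 ^ s * g.i}
  one_mem' := by
    refine ⟨dvd_zero _, dvd_zero _, ?_⟩
    simp
  mul_mem' := by
    rintro g h ⟨⟨ia, hia⟩, ⟨ja, hja⟩, ⟨wa, hwa⟩⟩ ⟨⟨ib, hib⟩, ⟨jb, hjb⟩, ⟨wb, hwb⟩⟩
    refine ⟨⟨ia + ib, by rw [mul_i, hia, hib]; ring⟩,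
      ⟨ja + jb, by rw [mul_j, hja, hjb]; ring⟩,
      ⟨wa + wb - ja * ib * 2 ^ (b + t), ?_⟩⟩
    rw [mul_k, mul_i]
    linear_combination hwa + hwb - (2:ℤ) ^ (b + t) * h.i * hja - (2:ℤ) ^ (b + t) * 2 ^ b * ja * hib
  inv_mem' := by
    rintro g ⟨⟨ia, hia⟩, ⟨ja, hja⟩, ⟨wa, hwa⟩⟩
    refine ⟨⟨-ia, by rw [inv_i, hia]; ring⟩, ⟨-ja, by rw [inv_j, hja]; ring⟩,
      ⟨-wa - ja * ia * 2 ^ (b + t), ?_⟩⟩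
    rw [inv_k, inv_i]
    linear_combination -hwa - (2:ℤ) ^ (b + t) * g.i * hja - (2:ℤ) ^ (b + t) * 2 ^ b * ja * hia

instance M_normal (b s t : ℕ) : (M b s t).Normal := by
  constructor
  rintro g ⟨⟨ia, hia⟩, ⟨ja, hja⟩, ⟨wa, hwa⟩⟩ h
  have hconj : h * g * h⁻¹ = ⟨g.i, g.j, g.k + h.i * g.j - h.j * g.i⟩ := by
    ext <;> simp <;> ring
  rw [hconj]
  refine ⟨⟨ia, hia⟩, ⟨ja, hja⟩, ⟨wa + h.i * ja - 2 ^ t * ia * h.j, ?_⟩⟩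
  simp only
  have e2 : (2:ℤ) ^ b * (2:ℤ) ^ t = 2 ^ (b + t) := (pow_add 2 b t).symm
  linear_combination hwa + (2:ℤ) ^ (b + t) * h.i * hja - (2:ℤ) ^ (b + t) * h.j * hia +
    (2:ℤ) ^ (b + t) * ia * h.j * e2

end Heis

end Heisenberg
section PFacts

variable (α β γ σ : ℕ)

lemma mem_rels_1 : (FreeGroup.of 0 : FreeGroup (Fin 2)) ^ 2 ^ α ∈ relsII α β γ σ :=
  Set.mem_insert _ _

lemma mem_rels_2 : (FreeGroup.of 1 : FreeGroup (Fin 2)) ^ 2 ^ β ∈ relsII α β γ σ :=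
  Set.mem_insert_of_mem _ (Set.mem_insert _ _)

lemma mem_rels_3 :
    pcomm (pcomm (FreeGroup.of 0) (FreeGroup.of 1)) (FreeGroup.of 0 : FreeGroup (Fin 2))
      ∈ relsII α β γ σ :=
  Set.mem_insert_of_mem _ (Set.mem_insert_of_mem _ (Set.mem_insert _ _))

lemma mem_rels_4 :
    pcomm (pcomm (FreeGroup.of 0) (FreeGroup.of 1)) (FreeGroup.of 1 : FreeGroup (Fin 2))
      ∈ relsII α β γ σ :=
  Set.mem_insert_of_mem _ (Set.mem_insert_of_mem _ (Set.mem_insert_of_mem _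
    (Set.mem_insert _ _)))

lemma mem_rels_5 :
    (FreeGroup.of 0 : FreeGroup (Fin 2)) ^ 2 ^ (α + σ - γ) *
      (pcomm (FreeGroup.of 0) (FreeGroup.of 1) ^ 2 ^ σ)⁻¹ ∈ relsII α β γ σ :=
  Set.mem_insert_of_mem _ (Set.mem_insert_of_mem _ (Set.mem_insert_of_mem _
    (Set.mem_insert_of_mem _ (Set.mem_singleton _))))

lemma mk_rel_one {r : FreeGroup (Fin 2)} (hr : r ∈ relsII α β γ σ) :
    PresentedGroup.mk (relsII α β γ σ) r = 1 :=
  (QuotientGroup.eq_one_iff r).2 (Subgroup.subset_normalClosure hr)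

lemma Pa : (PresentedGroup.of 0 : PresentedGroup (relsII α β γ σ)) ^ 2 ^ α = 1 := by
  have h := mk_rel_one α β γ σ (mem_rels_1 α β γ σ)
  rwa [map_pow] at h

lemma Pb : (PresentedGroup.of 1 : PresentedGroup (relsII α β γ σ)) ^ 2 ^ β = 1 := by
  have h := mk_rel_one α β γ σ (mem_rels_2 α β γ σ)
  rwa [map_pow] at h

lemma Pca : pcomm (pcomm (PresentedGroup.of 0) (PresentedGroup.of 1))
    (PresentedGroup.of 0 : PresentedGroup (relsII α β γ σ)) = 1 := by
  have h := mk_rel_one α β γ σ (mem_rels_3 α β γ σ)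
  rwa [map_pcomm, map_pcomm] at h

lemma Pcb : pcomm (pcomm (PresentedGroup.of 0) (PresentedGroup.of 1))
    (PresentedGroup.of 1 : PresentedGroup (relsII α β γ σ)) = 1 := by
  have h := mk_rel_one α β γ σ (mem_rels_4 α β γ σ)
  rwa [map_pcomm, map_pcomm] at h

lemma P5 : (PresentedGroup.of 0 : PresentedGroup (relsII α β γ σ)) ^ 2 ^ (α + σ - γ) =
    pcomm (PresentedGroup.of 0) (PresentedGroup.of 1) ^ 2 ^ σ := by
  have h := mk_rel_one α β γ σ (mem_rels_5 α β γ σ)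
  rw [map_mul, map_inv, map_pow, map_pow, map_pcomm] at h
  exact mul_inv_eq_one.1 h

lemma PCommA : Commute (pcomm (PresentedGroup.of 0) (PresentedGroup.of 1))
    (PresentedGroup.of 0 : PresentedGroup (relsII α β γ σ)) :=
  pcomm_eq_one_iff.1 (Pca α β γ σ)

lemma PCommB : Commute (pcomm (PresentedGroup.of 0) (PresentedGroup.of 1))
    (PresentedGroup.of 1 : PresentedGroup (relsII α β γ σ)) :=
  pcomm_eq_one_iff.1 (Pcb α β γ σ)

lemma pcomm_one_right {G : Type*} [Group G] (x : G) : pcomm x 1 = 1 := by simp [pcomm]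

lemma pcomm_one_left {G : Type*} [Group G] (x : G) : pcomm 1 x = 1 := by simp [pcomm]

lemma Pc_pow_beta : pcomm (PresentedGroup.of 0) (PresentedGroup.of 1 :
    PresentedGroup (relsII α β γ σ)) ^ 2 ^ β = 1 := by
  have h := pcomm_pow_right (PresentedGroup.of 0 : PresentedGroup (relsII α β γ σ))
    (PresentedGroup.of 1) (PCommB α β γ σ) (2 ^ β)
  rw [Pb α β γ σ, pcomm_one_right] at h
  exact h.symm

lemma Ptop : Subgroup.closure {(PresentedGroup.of 0 : PresentedGroup (relsII α β γ σ)),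
    PresentedGroup.of 1} = ⊤ := by
  have h := PresentedGroup.closure_range_of (relsII α β γ σ)
  have e : Set.range (PresentedGroup.of : Fin 2 → PresentedGroup (relsII α β γ σ)) =
      {PresentedGroup.of 0, PresentedGroup.of 1} := by
    ext g
    constructor
    · rintro ⟨i, rfl⟩
      fin_cases i
      · exact Set.mem_insert _ _
      · exact Set.mem_insert_of_mem _ rfl
    · rintro (rfl | rfl)
      · exact ⟨0, rfl⟩
      · exact ⟨1, rfl⟩
  rwa [e] at h

/-- In the presented group (γ = β case), `a ^ 2^(α-1) ≠ 1`. -/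
lemma a_pow_ne_one (hσγ : σ < γ) (hγβ : γ ≤ β) (h2γ : 2 * γ ≤ α + σ) (hγeqβ : γ = β) :
    (PresentedGroup.of 0 : PresentedGroup (relsII α β γ σ)) ^ 2 ^ (α - 1) ≠ 1 := by
  subst hγeqβ
  set t := α + σ - 2 * γ with ht
  have hβt : γ + t = α + σ - γ := by omega
  have hβtα : γ + t ≤ α := by omega
  have hσβ : σ + 1 ≤ γ := hσγ
  have hα1 : 1 ≤ α := by omega
  set f : Fin 2 → (Heis ⧸ Heis.M γ σ t) :=
    fun i => if i = 0 then QuotientGroup.mk Heis.A else QuotientGroup.mk Heis.B with hf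
  have hcast : ∀ n : ℕ, ((2 ^ n : ℕ) : ℤ) = 2 ^ n := by intro n; push_cast; ring
  have hmkA : ∀ n : ℕ, (QuotientGroup.mk Heis.A : Heis ⧸ Heis.M γ σ t) ^ n =
      QuotientGroup.mk (⟨(n : ℤ), 0, 0⟩ : Heis) := by
    intro n
    rw [← QuotientGroup.mk_pow, Heis.A_pow]
  have hpq : (2:ℤ) ^ γ * 2 ^ (γ + t) = 2 ^ (σ + α) := by
    rw [← pow_add]
    congr 1
    omega
  have hf0 : f 0 = QuotientGroup.mk Heis.A := by simp [hf]
  have hf1 : f 1 = QuotientGroup.mk Heis.B := by simp [hf]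
  have mkp : ∀ u v : Heis, pcomm (QuotientGroup.mk u) (QuotientGroup.mk v) =
      (QuotientGroup.mk (pcomm u v) : Heis ⧸ Heis.M γ σ t) := fun u v => rfl
  have hrels : ∀ r ∈ relsII α γ γ σ, FreeGroup.lift f r = 1 := by
    intro r hr
    rcases hr with rfl | rfl | rfl | rfl | rfl
    · rw [map_pow, FreeGroup.lift_apply_of, hf0, hmkA]
      refine (QuotientGroup.eq_one_iff _).2 ⟨?_, ?_, ?_⟩
      · simp only [hcast]
        exact pow_dvd_pow 2 hβtα
      · simp
      · simp only [hcast]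
        rw [hpq]
        refine Dvd.intro 1 ?_
        rw [pow_add]
        ring
    · rw [map_pow, FreeGroup.lift_apply_of, hf1, ← QuotientGroup.mk_pow, Heis.B_pow]
      refine (QuotientGroup.eq_one_iff _).2 ⟨by simp, by simp [hcast], by simp⟩
    · rw [map_pcomm, map_pcomm, FreeGroup.lift_apply_of, FreeGroup.lift_apply_of, hf0, hf1,
        mkp, mkp, Heis.pcomm_AB_A]
      simp
    · rw [map_pcomm, map_pcomm, FreeGroup.lift_apply_of, FreeGroup.lift_apply_of, hf0, hf1,
        mkp, mkp, Heis.pcomm_AB_B]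
      simp
    · rw [map_mul, map_inv, map_pow, map_pow, map_pcomm, FreeGroup.lift_apply_of,
        FreeGroup.lift_apply_of, hf0, hf1, mkp, hmkA, ← QuotientGroup.mk_pow,
        Heis.pcomm_AB_pow, ← QuotientGroup.mk_inv, ← QuotientGroup.mk_mul]
      refine (QuotientGroup.eq_one_iff _).2 ⟨?_, ?_, ?_⟩
      · simp only [Heis.mul_i, Heis.inv_i]
        simp [hcast, hβt]
      · simp
      · simp only [Heis.mul_k, Heis.mul_i, Heis.inv_k, Heis.inv_i, Heis.inv_j, Heis.mul_j]
        simp only [hcast, hβt]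
        refine Dvd.intro 0 ?_
        rw [← hβt]
        ring
  intro hone
  have hθ := congrArg (PresentedGroup.toGroup hrels) hone
  rw [map_pow, map_one, PresentedGroup.toGroup.of, hf0, hmkA] at hθ
  have hmem := (QuotientGroup.eq_one_iff _).1 hθ
  obtain ⟨-, -, hdvd⟩ := hmem
  simp only [hcast] at hdvd
  rw [hpq] at hdvd
  have h0 : (0:ℤ) * 2 ^ (γ + t) + 2 ^ σ * 2 ^ (α - 1) = 2 ^ (σ + (α - 1)) := by
    rw [pow_add]; ring
  rw [h0] at hdvd
  have hle := Int.le_of_dvd (by positivity) hdvd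
  have : σ + α ≤ σ + (α - 1) := by
    have := (pow_le_pow_iff_right₀ (a := (2:ℤ)) (by norm_num)).1 hle
    exact_mod_cast this
  omega

end PFacts
section Arith

lemma commute_of_eq {G : Type*} [Group G] {a b : G} (h : a * b = b * a) : Commute a b := h

lemma choose_pow_two_val (e : ℕ) (he : 1 ≤ e) :
    (2 ^ e).choose 2 = 2 ^ (e - 1) * (2 ^ e - 1) := by
  rw [Nat.choose_two_right]
  obtain ⟨d, rfl⟩ : ∃ d, e = d + 1 := ⟨e - 1, by omega⟩
  have h1 : (2:ℕ) ^ (d + 1) = 2 * 2 ^ d := by rw [pow_succ]; ring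
  rw [h1]
  rw [Nat.mul_assoc, Nat.mul_div_cancel_left _ (by norm_num : 0 < 2)]
  simp

lemma dvd_choose_pow_two {s e : ℕ} (h : s + 1 ≤ e) : 2 ^ s ∣ (2 ^ e).choose 2 := by
  rw [choose_pow_two_val e (by omega)]
  exact dvd_mul_of_dvd_left (pow_dvd_pow 2 (by omega)) _

end Arith

section NotCapable

lemma not_capable (α β γ σ : ℕ) (hσγ : σ < γ) (hγβ : γ ≤ β) (h2γ : 2 * γ ≤ α + σ)
    (hγeqβ : γ = β) (hα : β + 2 ≤ α) :
    ¬ IsCapable (PresentedGroup (relsII α β γ σ)) := by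
  subst hγeqβ
  rintro ⟨K, _, ⟨φ⟩⟩
  let ψ : K →* PresentedGroup (relsII α γ γ σ) :=
    φ.toMonoidHom.comp (QuotientGroup.mk' (Subgroup.center K))
  have hψs : Function.Surjective ψ := φ.surjective.comp (QuotientGroup.mk'_surjective _)
  have hcent : ∀ g : K, ψ g = 1 ↔ g ∈ Subgroup.center K := by
    intro g
    constructor
    · intro h
      have h2 : φ ((QuotientGroup.mk' (Subgroup.center K)) g) = φ 1 := by
        rw [map_one]; exact h
      have h3 := φ.injective h2
      exact (QuotientGroup.eq_one_iff g).1 h3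
    · intro h
      show φ ((QuotientGroup.mk' (Subgroup.center K)) g) = 1
      have : ((QuotientGroup.mk' (Subgroup.center K)) g) = 1 := (QuotientGroup.eq_one_iff g).2 h
      rw [this, map_one]
  obtain ⟨x, hx⟩ := hψs (PresentedGroup.of 0)
  obtain ⟨y, hy⟩ := hψs (PresentedGroup.of 1)
  -- z1, z2 are central in K
  have hz1c : pcomm (pcomm x y) x ∈ Subgroup.center K := by
    rw [← hcent, map_pcomm, map_pcomm, hx, hy]
    exact Pca α γ γ σ
  have hz2c : pcomm (pcomm x y) y ∈ Subgroup.center K := by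
    rw [← hcent, map_pcomm, map_pcomm, hx, hy]
    exact Pcb α γ γ σ
  have h1 : ∀ g : K, Commute (pcomm (pcomm x y) x) g :=
    fun g => commute_of_eq ((Subgroup.mem_center_iff.1 hz1c) g).symm
  have h2 : ∀ g : K, Commute (pcomm (pcomm x y) y) g :=
    fun g => commute_of_eq ((Subgroup.mem_center_iff.1 hz2c) g).symm
  set z := pcomm x y with hzdef
  set z1 := pcomm z x with hz1def
  set z2 := pcomm z y with hz2def
  set em := α + σ - γ with hem
  set m := 2 ^ em with hm
  set s := 2 ^ σ with hs
  -- central powers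
  have hyc : y ^ 2 ^ γ ∈ Subgroup.center K := by
    rw [← hcent, map_pow, hy]; exact Pb α γ γ σ
  have hwc : x ^ m * (z ^ s)⁻¹ ∈ Subgroup.center K := by
    rw [← hcent, map_mul, map_inv, map_pow, map_pow, map_pcomm, hx, hy]
    rw [hm, hem, hs, P5 α γ γ σ]
    simp
  -- (1) z1 ^ 2^σ = 1
  have hz1s : z1 ^ s = 1 := by
    have hc0 : x * (x ^ m * (z ^ s)⁻¹) = (x ^ m * (z ^ s)⁻¹) * x :=
      Subgroup.mem_center_iff.1 hwc x
    have hc1 : x ^ m * (x * (z ^ s)⁻¹) = x ^ m * ((z ^ s)⁻¹ * x) := by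
      have hxm : x * x ^ m = x ^ m * x := ((Commute.refl x).pow_right m).eq
      calc x ^ m * (x * (z ^ s)⁻¹) = (x ^ m * x) * (z ^ s)⁻¹ := by group
        _ = (x * x ^ m) * (z ^ s)⁻¹ := by rw [← hxm]
        _ = x * (x ^ m * (z ^ s)⁻¹) := by group
        _ = (x ^ m * (z ^ s)⁻¹) * x := hc0
        _ = x ^ m * ((z ^ s)⁻¹ * x) := by group
    have hxv : x * (z ^ s)⁻¹ = (z ^ s)⁻¹ * x := mul_left_cancel hc1
    have hzsx : Commute (z ^ s) x := by
      have := (commute_of_eq hxv).inv_right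
      rw [inv_inv] at this
      exact this.symm
    have hp : pcomm (z ^ s) x = z1 ^ s := pcomm_pow_left z x (h1 z) s
    rw [← hp]
    exact pcomm_eq_one_iff.2 hzsx.eq
  have hz1dvd : ∀ N : ℕ, 2 ^ σ ∣ N → z1 ^ N = 1 := by
    rintro N ⟨d, rfl⟩
    rw [pow_mul, ← hs, hz1s, one_pow]
  -- (2) E2 : z^(2^γ) * z2^((2^γ).choose 2) = 1
  have hE2 : z ^ 2 ^ γ * z2 ^ ((2 ^ γ).choose 2) = 1 := by
    rw [← hall_right x y h2 (2 ^ γ)]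
    exact pcomm_eq_one_iff.2 (Subgroup.mem_center_iff.1 hyc x)
  -- (3) z2^(2^γ) = 1
  have hz2γ : z2 ^ 2 ^ γ = 1 := by
    have hcy : Commute z (y ^ 2 ^ γ) := commute_of_eq (Subgroup.mem_center_iff.1 hyc z)
    have := pcomm_pow_right z y (h2 y) (2 ^ γ)
    rw [← this]
    exact pcomm_eq_one_iff.2 hcy.eq
  -- (4) E4 : z^m = z2^s
  have hE4 : z ^ m = z2 ^ s := by
    have hcwy : pcomm (x ^ m * (z ^ s)⁻¹) y = 1 :=
      pcomm_eq_one_iff.2 (Subgroup.mem_center_iff.1 hwc y).symm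
    rw [pcomm_mul_left] at hcwy
    have hhall : pcomm (x ^ m) y = z ^ m * z1 ^ (m.choose 2) := hall_left x y h1 m
    have hz1m : z1 ^ (m.choose 2) = 1 := by
      refine hz1dvd _ (dvd_choose_pow_two ?_)
      omega
    rw [hhall, hz1m, mul_one] at hcwy
    have hconj : ((z ^ s)⁻¹)⁻¹ * z ^ m * (z ^ s)⁻¹ = z ^ m := by
      rw [inv_inv]
      have := (Commute.pow_pow_self z s m).eq
      rw [this]
      group
    rw [hconj] at hcwy
    have hzsy : pcomm ((z ^ s)⁻¹) y = (z2 ^ (s:ℤ))⁻¹ := by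
      have he : (z ^ s)⁻¹ = z ^ (-(s : ℤ)) := by rw [zpow_neg, zpow_natCast]
      rw [he, pcomm_zpow_left z y (h2 z) (-(s:ℤ)), zpow_neg]
    rw [hzsy, zpow_natCast] at hcwy
    exact (mul_inv_eq_one.1 hcwy)
  -- (6) combine: z2 ^ (s + c2γ * 2^(em-γ)) = 1
  have hzm2 : z ^ m = ((z2 ^ ((2 ^ γ).choose 2)) ^ 2 ^ (em - γ))⁻¹ := by
    have hmeq : m = 2 ^ γ * 2 ^ (em - γ) := by
      rw [hm, ← pow_add]
      congr 1
      omega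
    have hz2g : z ^ 2 ^ γ = (z2 ^ ((2 ^ γ).choose 2))⁻¹ :=
      eq_inv_of_mul_eq_one_left hE2
    rw [hmeq, pow_mul, hz2g, inv_pow]
  have hkey : z2 ^ (s + (2 ^ γ).choose 2 * 2 ^ (em - γ)) = 1 := by
    rw [pow_add, ← hE4, hzm2, ← pow_mul]
    group
  -- (7) factor the exponent
  have hγ1 : 1 ≤ γ := by omega
  have hfac : s + (2 ^ γ).choose 2 * 2 ^ (em - γ) =
      2 ^ σ * (1 + 2 ^ (α - γ - 1) * (2 ^ γ - 1)) := by
    rw [choose_pow_two_val γ hγ1, hs]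
    have hpp : (2:ℕ) ^ (γ - 1) * 2 ^ (em - γ) = 2 ^ σ * 2 ^ (α - γ - 1) := by
      rw [← pow_add, ← pow_add]
      congr 1
      omega
    generalize (2:ℕ) ^ γ - 1 = D
    calc 2 ^ σ + 2 ^ (γ - 1) * D * 2 ^ (em - γ)
        = 2 ^ σ + (2 ^ (γ - 1) * 2 ^ (em - γ)) * D := by ring
      _ = 2 ^ σ + (2 ^ σ * 2 ^ (α - γ - 1)) * D := by rw [hpp]
      _ = 2 ^ σ * (1 + 2 ^ (α - γ - 1) * D) := by ring
  -- (8) the cofactor is odd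
  have hodd : Odd (1 + 2 ^ (α - γ - 1) * (2 ^ γ - 1)) := by
    refine ⟨2 ^ (α - γ - 2) * (2 ^ γ - 1), ?_⟩
    have : (2:ℕ) ^ (α - γ - 1) = 2 * 2 ^ (α - γ - 2) := by
      rw [← pow_succ']
      congr 1
      omega
    rw [this]
    ring
  -- (9) z2 ^ 2^σ = 1
  have hz2s : z2 ^ s = 1 := by
    rw [hfac] at hkey
    have hg := pow_gcd_eq_one.2 ⟨hkey, hz2γ⟩
    obtain ⟨k, hkγ, hgk⟩ := (Nat.dvd_prime_pow Nat.prime_two).1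
      (Nat.gcd_dvd_right (2 ^ σ * (1 + 2 ^ (α - γ - 1) * (2 ^ γ - 1))) (2 ^ γ))
    have hcop : Nat.Coprime (2 ^ k) (1 + 2 ^ (α - γ - 1) * (2 ^ γ - 1)) :=
      Nat.Coprime.pow_left k (Nat.coprime_two_left.2 hodd)
    have hdvd2 : 2 ^ k ∣ 2 ^ σ * (1 + 2 ^ (α - γ - 1) * (2 ^ γ - 1)) := by
      rw [← hgk]
      exact Nat.gcd_dvd_left _ _
    have hdk : 2 ^ k ∣ 2 ^ σ := hcop.dvd_of_dvd_mul_right hdvd2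
    obtain ⟨c, hc⟩ := hdk
    rw [hs, hc, pow_mul, ← hgk, hg, one_pow]
  have hz2dvd : ∀ N : ℕ, 2 ^ σ ∣ N → z2 ^ N = 1 := by
    rintro N ⟨d, rfl⟩
    rw [pow_mul, ← hs, hz2s, one_pow]
  -- (11) z ^ 2^γ = 1
  have hzγ : z ^ 2 ^ γ = 1 := by
    have : z2 ^ ((2 ^ γ).choose 2) = 1 := hz2dvd _ (dvd_choose_pow_two (by omega))
    rw [this, mul_one] at hE2
    exact hE2
  -- (12) z ^ 2^(α-1) = 1
  have hzα : z ^ 2 ^ (α - 1) = 1 := by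
    have hmeq : (2:ℕ) ^ (α - 1) = 2 ^ γ * 2 ^ (α - 1 - γ) := by
      rw [← pow_add]
      congr 1
      omega
    rw [hmeq, pow_mul, hzγ, one_pow]
  -- (13) x^(2^(α-1)) commutes with y
  have hcuy : Commute (x ^ 2 ^ (α - 1)) y := by
    have hh := hall_left x y h1 (2 ^ (α - 1))
    have hz1p : z1 ^ ((2 ^ (α - 1)).choose 2) = 1 := by
      refine hz1dvd _ (dvd_choose_pow_two ?_)
      omega
    rw [hzα, hz1p, one_mul] at hh
    exact commute_of_eq (pcomm_eq_one_iff.1 hh)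
  have hcux : Commute (x ^ 2 ^ (α - 1)) x := ((Commute.refl x).pow_left _)
  -- (14) x^(2^(α-1)) is central
  have hu0c : x ^ 2 ^ (α - 1) ∈ Subgroup.center K := by
    rw [Subgroup.mem_center_iff]
    intro g
    have hmem : ψ g ∈ Subgroup.closure {(PresentedGroup.of 0 : PresentedGroup (relsII α γ γ σ)),
        PresentedGroup.of 1} := by
      rw [Ptop α γ γ σ]
      trivial
    have himg : ψ '' ({x, y} : Set K) = {PresentedGroup.of 0, PresentedGroup.of 1} := by
      rw [Set.image_insert_eq, Set.image_singleton, hx, hy]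
    have hcl : Subgroup.closure ({(PresentedGroup.of 0 : PresentedGroup (relsII α γ γ σ)),
        PresentedGroup.of 1} : Set (PresentedGroup (relsII α γ γ σ))) =
        Subgroup.map ψ (Subgroup.closure {x, y}) := by
      rw [MonoidHom.map_closure, himg]
    rw [hcl] at hmem
    obtain ⟨h, hh, hhg⟩ := hmem
    have hζ : h⁻¹ * g ∈ Subgroup.center K := by
      rw [← hcent, map_mul, map_inv, hhg]
      simp
    have hcomm_h : Commute (x ^ 2 ^ (α - 1)) h := by
      have hle : Subgroup.closure ({x, y} : Set K) ≤
          Subgroup.centralizer {x ^ 2 ^ (α - 1)} := by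
        rw [Subgroup.closure_le]
        rintro w (rfl | rfl)
        · exact Subgroup.mem_centralizer_iff.2 (by rintro u rfl; exact hcux.eq)
        · exact Subgroup.mem_centralizer_iff.2 (by rintro u rfl; exact hcuy.eq)
      have := hle hh
      exact commute_of_eq (Subgroup.mem_centralizer_iff.1 this _ rfl)
    have hgdecomp : g = h * (h⁻¹ * g) := by group
    rw [hgdecomp]
    have hcζ := Subgroup.mem_center_iff.1 hζ (x ^ 2 ^ (α - 1))
    calc h * (h⁻¹ * g) * (x ^ 2 ^ (α - 1)) = h * ((h⁻¹ * g) * x ^ 2 ^ (α - 1)) := by group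
      _ = h * (x ^ 2 ^ (α - 1) * (h⁻¹ * g)) := by rw [← hcζ]
      _ = (h * x ^ 2 ^ (α - 1)) * (h⁻¹ * g) := by group
      _ = (x ^ 2 ^ (α - 1) * h) * (h⁻¹ * g) := by rw [← hcomm_h.eq]
      _ = x ^ 2 ^ (α - 1) * (h * (h⁻¹ * g)) := by group
  -- (15) contradiction
  have hfinal : (PresentedGroup.of 0 : PresentedGroup (relsII α γ γ σ)) ^ 2 ^ (α - 1) = 1 := by
    rw [← hx, ← map_pow]
    exact (hcent _).2 hu0c
  exact a_pow_ne_one α γ γ σ hσγ le_rfl h2γ rfl hfinal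

end NotCapable
section F4def

/-- Integer-valued `t(t-1)/2`. -/
def C2 (t : ℤ) : ℤ := t * (t - 1) / 2

lemma two_mul_C2 (t : ℤ) : 2 * C2 t = t * (t - 1) := by
  have h : (2:ℤ) ∣ t * (t - 1) := by
    rcases Int.even_or_odd t with he | ho
    · obtain ⟨u, hu⟩ := he
      exact ⟨u * (t - 1), by rw [hu]; ring⟩
    · obtain ⟨u, hu⟩ := ho
      exact ⟨t * u, by rw [hu]; ring⟩
  rw [C2, Int.mul_ediv_cancel' h]

lemma C2_add (a b : ℤ) : C2 (a + b) = C2 a + C2 b + a * b := by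
  have h2 : 2 * C2 (a + b) = 2 * (C2 a + C2 b + a * b) := by
    linear_combination two_mul_C2 (a + b) - two_mul_C2 a - two_mul_C2 b
  omega

lemma C2_zero : C2 0 = 0 := rfl

lemma C2_one : C2 1 = 0 := rfl

lemma C2_neg (t : ℤ) : C2 (-t) = C2 t + t := by
  have h2 : 2 * C2 (-t) = 2 * (C2 t + t) := by
    linear_combination two_mul_C2 (-t) - two_mul_C2 t
  omega

lemma C2_of_eq {j p j1 : ℤ} (h : j = 2 * p * j1) : C2 j = p * j1 * (2 * p * j1 - 1) := by
  have h2 : 2 * C2 j = 2 * (p * j1 * (2 * p * j1 - 1)) := by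
    rw [two_mul_C2, h]; ring
  omega

/-- A model of the free class-3 nilpotent group on x,y with `[[x,y],x] = 1`:
`(i,j,k,n) ~ x^i y^j z^k z2^n` where `z = [x,y]`, `z2 = [z,y]`. -/
@[ext]
structure F4 where
  i : ℤ
  j : ℤ
  k : ℤ
  n : ℤ

namespace F4

instance : Mul F4 := ⟨fun g h => ⟨g.i + h.i, g.j + h.j, g.k + h.k - g.j * h.i,
  g.n + h.n - h.i * C2 g.j + (g.k - g.j * h.i) * h.j⟩⟩
instance : One F4 := ⟨⟨0, 0, 0, 0⟩⟩
instance : Inv F4 := ⟨fun g => ⟨-g.i, -g.j, -g.i * g.j - g.k,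
  -C2 g.j * g.i + g.i * g.j * g.j + g.j * g.k - g.n⟩⟩

@[simp] lemma mul_i (g h : F4) : (g * h).i = g.i + h.i := rfl
@[simp] lemma mul_j (g h : F4) : (g * h).j = g.j + h.j := rfl
@[simp] lemma mul_k (g h : F4) : (g * h).k = g.k + h.k - g.j * h.i := rfl
@[simp] lemma mul_n (g h : F4) :
    (g * h).n = g.n + h.n - h.i * C2 g.j + (g.k - g.j * h.i) * h.j := rfl
@[simp] lemma one_i : (1 : F4).i = 0 := rfl
@[simp] lemma one_j : (1 : F4).j = 0 := rfl
@[simp] lemma one_k : (1 : F4).k = 0 := rfl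
@[simp] lemma one_n : (1 : F4).n = 0 := rfl
@[simp] lemma inv_i (g : F4) : g⁻¹.i = -g.i := rfl
@[simp] lemma inv_j (g : F4) : g⁻¹.j = -g.j := rfl
@[simp] lemma inv_k (g : F4) : g⁻¹.k = -g.i * g.j - g.k := rfl
@[simp] lemma inv_n (g : F4) :
    g⁻¹.n = -C2 g.j * g.i + g.i * g.j * g.j + g.j * g.k - g.n := rfl

instance : Group F4 where
  mul_assoc g h f := by
    ext <;> simp [C2_add] <;> ring
  one_mul g := by ext <;> simp [C2_zero]
  mul_one g := by ext <;> simp [C2_zero]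
  inv_mul_cancel g := by
    ext <;> simp [C2_neg, C2_zero] <;> try ring
    linear_combination (-g.i) * two_mul_C2 g.j

def X : F4 := ⟨1, 0, 0, 0⟩
def Y : F4 := ⟨0, 1, 0, 0⟩
def Z : F4 := ⟨0, 0, 1, 0⟩
def Z2 : F4 := ⟨0, 0, 0, 1⟩

lemma X_pow (m : ℕ) : X ^ m = ⟨m, 0, 0, 0⟩ := by
  induction m with
  | zero => rfl
  | succ m ih => rw [pow_succ, ih]; ext <;> simp [X, C2_zero]
lemma Y_pow (m : ℕ) : Y ^ m = ⟨0, m, 0, 0⟩ := by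
  induction m with
  | zero => rfl
  | succ m ih =>
      rw [pow_succ, ih]; ext <;> simp [Y]
lemma Z_pow (m : ℕ) : Z ^ m = ⟨0, 0, m, 0⟩ := by
  induction m with
  | zero => rfl
  | succ m ih => rw [pow_succ, ih]; ext <;> simp [Z, C2_zero]
lemma Z2_pow (m : ℕ) : Z2 ^ m = ⟨0, 0, 0, m⟩ := by
  induction m with
  | zero => rfl
  | succ m ih => rw [pow_succ, ih]; ext <;> simp [Z2, C2_zero]

lemma X_zpow (m : ℤ) : X ^ m = ⟨m, 0, 0, 0⟩ := by
  induction m using Int.induction_on with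
  | zero => rfl
  | succ m ih => rw [zpow_add_one, ih]; ext <;> simp [X, C2_zero]
  | pred m ih => rw [zpow_sub_one, ih]; ext <;> simp [X, C2_zero] <;> ring
lemma Y_zpow (m : ℤ) : Y ^ m = ⟨0, m, 0, 0⟩ := by
  induction m using Int.induction_on with
  | zero => rfl
  | succ m ih => rw [zpow_add_one, ih]; ext <;> simp [Y, C2_add, C2_one, C2_zero]
  | pred m ih => rw [zpow_sub_one, ih]; ext <;> simp [Y, C2_one, C2_neg, C2_zero] <;> ring
lemma Z_zpow (m : ℤ) : Z ^ m = ⟨0, 0, m, 0⟩ := by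
  induction m using Int.induction_on with
  | zero => rfl
  | succ m ih => rw [zpow_add_one, ih]; ext <;> simp [Z, C2_zero]
  | pred m ih => rw [zpow_sub_one, ih]; ext <;> simp [Z, C2_zero] <;> ring
lemma Z2_zpow (m : ℤ) : Z2 ^ m = ⟨0, 0, 0, m⟩ := by
  induction m using Int.induction_on with
  | zero => rfl
  | succ m ih => rw [zpow_add_one, ih]; ext <;> simp [Z2, C2_zero]
  | pred m ih => rw [zpow_sub_one, ih]; ext <;> simp [Z2, C2_zero] <;> ring

lemma pcomm_XY : pcomm X Y = Z := by
  ext <;> simp [pcomm, X, Y, Z, C2_zero, C2_one, C2_neg] <;> ring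

lemma pcomm_ZX : pcomm Z X = 1 := by
  ext <;> simp [pcomm, X, Z, C2_zero] <;> ring

lemma pcomm_ZY : pcomm Z Y = Z2 := by
  ext <;> simp [pcomm, Y, Z, Z2, C2_zero, C2_one, C2_neg] <;> ring

lemma Z2_central (g : F4) : g * Z2 = Z2 * g := by
  ext <;> simp [Z2, C2_zero] <;> ring

/-- commutator with X: `[g, X] = (0,0,-j,-C2 j)`. -/
lemma pcomm_X (g : F4) : pcomm g X = ⟨0, 0, -g.j, -C2 g.j⟩ := by
  apply pcomm_eq_of_mul_eq
  ext <;> simp [X, C2_zero] <;> ring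

/-- commutator with Y: `[g, Y] = (0,0,i, k + i*j)`. -/
lemma pcomm_Y (g : F4) : pcomm g Y = ⟨0, 0, g.i, g.k + g.i * g.j⟩ := by
  apply pcomm_eq_of_mul_eq
  ext <;> simp [Y, C2_zero, C2_one] <;> ring

/-- decomposition into generators. -/
lemma decomp (g : F4) : g = X ^ g.i * Y ^ g.j * Z ^ g.k * Z2 ^ g.n := by
  rw [X_zpow, Y_zpow, Z_zpow, Z2_zpow]
  ext <;> simp [C2_zero] <;> ring

lemma closure_top : Subgroup.closure ({X, Y} : Set F4) = ⊤ := by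
  rw [Subgroup.eq_top_iff']
  intro g
  have hX : X ∈ Subgroup.closure ({X, Y} : Set F4) :=
    Subgroup.subset_closure (Set.mem_insert _ _)
  have hY : Y ∈ Subgroup.closure ({X, Y} : Set F4) :=
    Subgroup.subset_closure (Set.mem_insert_of_mem _ rfl)
  have hZ : Z ∈ Subgroup.closure ({X, Y} : Set F4) := by
    rw [← pcomm_XY]
    exact Subgroup.mul_mem _ (Subgroup.mul_mem _ (Subgroup.mul_mem _
      (Subgroup.inv_mem _ hX) (Subgroup.inv_mem _ hY)) hX) hY
  have hZ2 : Z2 ∈ Subgroup.closure ({X, Y} : Set F4) := by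
    rw [← pcomm_ZY]
    exact Subgroup.mul_mem _ (Subgroup.mul_mem _ (Subgroup.mul_mem _
      (Subgroup.inv_mem _ hZ) (Subgroup.inv_mem _ hY)) hZ) hY
  rw [decomp g]
  exact Subgroup.mul_mem _ (Subgroup.mul_mem _ (Subgroup.mul_mem _
    (Subgroup.zpow_mem _ hX _) (Subgroup.zpow_mem _ hY _)) (Subgroup.zpow_mem _ hZ _))
    (Subgroup.zpow_mem _ hZ2 _)

/-- The normal subgroup of relations (`b` stands for `β - 1`). -/
def L (b : ℕ) : Subgroup F4 where
  carrier := {g | ∃ i1 j1 k1 w : ℤ, g.i = 4 * 2 ^ b * i1 ∧ g.j = 2 * 2 ^ b * j1 ∧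
    g.k = 2 * 2 ^ b * k1 ∧ g.n = 2 * 2 ^ b * w - 2 ^ b * k1}
  one_mem' := ⟨0, 0, 0, 0, by simp⟩
  mul_mem' := by
    rintro g h ⟨i1, j1, k1, w1, hgi, hgj, hgk, hgn⟩ ⟨i2, j2, k2, w2, hhi, hhj, hhk, hhn⟩
    have hC2 : C2 g.j = 2 ^ b * j1 * (2 * 2 ^ b * j1 - 1) := C2_of_eq hgj
    refine ⟨i1 + i2, j1 + j2, -4 * i2 * j1 * 2 ^ b + k1 + k2,
      -4 * i2 * j1 * j1 * 2 ^ b * 2 ^ b - 8 * i2 * j1 * j2 * 2 ^ b * 2 ^ b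
        + 2 * j2 * k1 * 2 ^ b + w1 + w2, ?_, ?_, ?_, ?_⟩
    · rw [mul_i, hgi, hhi]; ring
    · rw [mul_j, hgj, hhj]; ring
    · rw [mul_k, hgk, hhk, hgj, hhi]; ring
    · rw [mul_n, hgn, hhn, hC2, hgk, hgj, hhi, hhj]; ring
  inv_mem' := by
    rintro g ⟨i1, j1, k1, w1, hgi, hgj, hgk, hgn⟩
    have hC2 : C2 g.j = 2 ^ b * j1 * (2 * 2 ^ b * j1 - 1) := C2_of_eq hgj
    refine ⟨-i1, -j1, -4 * i1 * j1 * 2 ^ b - k1,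
      4 * i1 * j1 * j1 * 2 ^ b * 2 ^ b + 2 * j1 * k1 * 2 ^ b - w1, ?_, ?_, ?_, ?_⟩
    · rw [inv_i, hgi]; ring
    · rw [inv_j, hgj]; ring
    · rw [inv_k, hgi, hgj, hgk]; ring
    · rw [inv_n, hC2, hgi, hgj, hgk, hgn]; ring

instance L_normal (b : ℕ) : (L b).Normal := by
  constructor
  rintro g ⟨i1, j1, k1, w1, hgi, hgj, hgk, hgn⟩ h
  have hC2 : C2 g.j = 2 ^ b * j1 * (2 * 2 ^ b * j1 - 1) := C2_of_eq hgj
  have hconj : h * g * h⁻¹ = ⟨g.i, g.j, g.k + h.i * g.j - h.j * g.i,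
      g.n - C2 h.j * g.i + h.i * C2 g.j + h.j * h.j * g.i - h.j * g.i * g.j
        - h.j * g.k + h.k * g.j⟩ := by
    ext <;> simp [C2_add, C2_neg] <;> ring
  rw [hconj]
  refine ⟨i1, j1, h.i * j1 - 2 * h.j * i1 + k1,
    -2 * C2 h.j * i1 + h.i * j1 * j1 * 2 ^ b + 2 * h.j * h.j * i1 - h.j * i1
      - 4 * h.j * i1 * j1 * 2 ^ b - h.j * k1 + h.k * j1 + w1, hgi, hgj, ?_, ?_⟩
  · simp only
    rw [hgk, hgj, hgi]; ring
  · simp only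
    rw [hgn, hC2, hgk, hgj, hgi]; ring

end F4

end F4def
section Capable

namespace Cap

variable (b : ℕ)

local notation "PP" => PresentedGroup (relsII (b + 2) (b + 1) (b + 1) b)

/-- generators of the presented group -/
noncomputable def aa : PP := PresentedGroup.of 0
noncomputable def bb : PP := PresentedGroup.of 1
noncomputable def cc : PP := pcomm (aa b) (bb b)

lemma hca : Commute (cc b) (aa b) := PCommA (b+2) (b+1) (b+1) b
lemma hcb : Commute (cc b) (bb b) := PCommB (b+2) (b+1) (b+1) b

lemma cast1 : ((2:ℤ) * 2 ^ b) = ((2 ^ (b+1) : ℕ) : ℤ) := by push_cast; ring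
lemma cast2 : ((4:ℤ) * 2 ^ b) = ((2 ^ (b+2) : ℕ) : ℤ) := by
  push_cast
  rw [pow_add]
  ring

lemma aa_pow1 : (aa b) ^ ((2:ℤ) * 2 ^ b) = (cc b) ^ (((2:ℕ) ^ b : ℕ) : ℤ) := by
  rw [cast1, zpow_natCast, zpow_natCast]
  have h := P5 (b+2) (b+1) (b+1) b
  have he : (b+2) + b - (b+1) = b + 1 := by omega
  rw [he] at h
  exact h

lemma aa_pow2 : (aa b) ^ ((4:ℤ) * 2 ^ b) = 1 := by
  rw [cast2, zpow_natCast]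
  exact Pa (b+2) (b+1) (b+1) b

lemma bb_pow1 : (bb b) ^ ((2:ℤ) * 2 ^ b) = 1 := by
  rw [cast1, zpow_natCast]
  exact Pb (b+2) (b+1) (b+1) b

lemma cc_pow1 : (cc b) ^ ((2:ℤ) * 2 ^ b) = 1 := by
  rw [cast1, zpow_natCast]
  exact Pc_pow_beta (b+2) (b+1) (b+1) b

/-- the step-down homomorphism `F4 →* PP`. -/
noncomputable def psi : F4 →* PP where
  toFun g := (aa b) ^ g.i * (bb b) ^ g.j * (cc b) ^ g.k
  map_one' := by simp
  map_mul' g h := by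
    simp only [F4.mul_i, F4.mul_j, F4.mul_k]
    have hswap : (bb b) ^ g.j * (aa b) ^ h.i =
        (aa b) ^ h.i * (bb b) ^ g.j * (cc b) ^ (-(h.i * g.j)) :=
      swap_zpow (aa b) (bb b) (hca b) (hcb b) h.i g.j
    have swapBC : ∀ (u v : ℤ) (T : PP), (bb b) ^ v * ((cc b) ^ u * T)
        = (cc b) ^ u * ((bb b) ^ v * T) := by
      intro u v T
      rw [← mul_assoc, ← ((hcb b).zpow_zpow u v).eq, mul_assoc]
    have swapAC : ∀ (u v : ℤ) (T : PP), (cc b) ^ u * ((aa b) ^ v * T)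
        = (aa b) ^ v * ((cc b) ^ u * T) := by
      intro u v T
      rw [← mul_assoc, ((hca b).zpow_zpow u v).eq, mul_assoc]
    have swapBA : ∀ T : PP, (bb b) ^ g.j * ((aa b) ^ h.i * T)
        = (aa b) ^ h.i * ((bb b) ^ g.j * ((cc b) ^ (-(h.i * g.j)) * T)) := by
      intro T
      rw [← mul_assoc, hswap]
      simp only [mul_assoc]
    have he : g.k + h.k - g.j * h.i = -(h.i * g.j) + (g.k + h.k) := by ring
    rw [he, zpow_add (aa b) g.i h.i, zpow_add (bb b) g.j h.j,
      zpow_add (cc b) (-(h.i * g.j)) (g.k + h.k), zpow_add (cc b) g.k h.k]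
    simp only [mul_assoc]
    conv_rhs => rw [swapAC g.k h.i, swapBA]
    conv_lhs => rw [swapBC (-(h.i * g.j)) h.j, swapBC g.k h.j]

lemma psi_X : psi b F4.X = aa b := by
  simp [psi, F4.X]

lemma psi_Y : psi b F4.Y = bb b := by
  simp [psi, F4.Y]

lemma psi_L : ∀ g ∈ F4.L b, psi b g = 1 := by
  rintro g ⟨i1, j1, k1, w, hi, hj, hk, hn⟩
  show (aa b) ^ g.i * (bb b) ^ g.j * (cc b) ^ g.k = 1
  rw [hi, hj, hk]
  rw [zpow_mul (aa b) ((4:ℤ) * 2 ^ b) i1, zpow_mul (bb b) ((2:ℤ) * 2 ^ b) j1,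
    zpow_mul (cc b) ((2:ℤ) * 2 ^ b) k1, aa_pow2, bb_pow1, cc_pow1]
  simp

/-- `psi` kills everything whose image in `K` is central. -/
lemma psi_center : ∀ g : F4,
    (QuotientGroup.mk' (F4.L b) g) ∈ Subgroup.center (F4 ⧸ F4.L b) → psi b g = 1 := by
  intro g hg
  have hgx : pcomm g F4.X ∈ F4.L b := by
    have h0 := (Subgroup.mem_center_iff.1 hg (QuotientGroup.mk' (F4.L b) F4.X)).symm
    have h1 : pcomm ((QuotientGroup.mk' (F4.L b)) g) ((QuotientGroup.mk' (F4.L b)) F4.X) = 1 :=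
      pcomm_eq_one_iff.2 h0
    rw [← map_pcomm] at h1
    exact (QuotientGroup.eq_one_iff _).1 h1
  have hgy : pcomm g F4.Y ∈ F4.L b := by
    have h0 := (Subgroup.mem_center_iff.1 hg (QuotientGroup.mk' (F4.L b) F4.Y)).symm
    have h1 : pcomm ((QuotientGroup.mk' (F4.L b)) g) ((QuotientGroup.mk' (F4.L b)) F4.Y) = 1 :=
      pcomm_eq_one_iff.2 h0
    rw [← map_pcomm] at h1
    exact (QuotientGroup.eq_one_iff _).1 h1
  rw [F4.pcomm_X] at hgx
  rw [F4.pcomm_Y] at hgy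
  obtain ⟨i1, j1, k1, w1, _, _, h3, _⟩ := hgx
  obtain ⟨i2, j2, k2, w2, _, _, h3', h4'⟩ := hgy
  simp only at h3 h3' h4'
  -- h3 : -g.j = 2*2^b*k1 ; h3' : g.i = 2*2^b*k2 ; h4' : g.k + g.i*g.j = 2*2^b*w2 - 2^b*k2
  have hgj : g.j = (2 * 2 ^ b) * (-k1) := by linear_combination -h3
  have hgk : g.k = (2 * 2 ^ b) * w2 - 2 ^ b * k2 - g.i * g.j := by linear_combination h4'
  show (aa b) ^ g.i * (bb b) ^ g.j * (cc b) ^ g.k = 1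
  have hb1 : (bb b) ^ g.j = 1 := by
    rw [hgj, zpow_mul, bb_pow1, one_zpow]
  have ha1 : (aa b) ^ g.i = (cc b) ^ ((2 ^ b : ℤ) * k2) := by
    have : g.i = (2 * 2 ^ b) * k2 := h3'
    rw [this, zpow_mul, aa_pow1, ← zpow_mul]
    congr 1
  rw [hb1, ha1, mul_one, ← zpow_add]
  have hexp : (2 ^ b : ℤ) * k2 + g.k = (2 * 2 ^ b) * (w2 - k2 * ((2 * 2 ^ b) * (-k1))) := by
    rw [hgk, h3', hgj]
    ring
  rw [hexp, zpow_mul, cc_pow1, one_zpow]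

/-- the induced homomorphism from `K ⧸ Z(K)`. -/
noncomputable def Psi2 : ((F4 ⧸ F4.L b) ⧸ Subgroup.center (F4 ⧸ F4.L b)) →* PP := by
  refine QuotientGroup.lift _ (QuotientGroup.lift (F4.L b) (psi b) (fun g hg => MonoidHom.mem_ker.2 (psi_L b g hg))) ?_
  intro q hq
  induction q using QuotientGroup.induction_on with
  | H g =>
    rw [MonoidHom.mem_ker, QuotientGroup.lift_mk']
    exact psi_center b g hq

-- the projection
def piK : F4 →* ((F4 ⧸ F4.L b) ⧸ Subgroup.center (F4 ⧸ F4.L b)) :=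
  (QuotientGroup.mk' (Subgroup.center (F4 ⧸ F4.L b))).comp (QuotientGroup.mk' (F4.L b))

lemma piK_surj : Function.Surjective (piK b) :=
  (QuotientGroup.mk'_surjective _).comp (QuotientGroup.mk'_surjective _)

lemma Psi2_piK (g : F4) : Psi2 b (piK b g) = psi b g := by
  simp [Psi2, piK, QuotientGroup.lift_mk']

/-- elements of `F4` that are central in `K` modulo L. -/
lemma mk_mem_center_of (g : F4)
    (H : ∀ h : F4, (QuotientGroup.mk' (F4.L b)) (g * h) = (QuotientGroup.mk' (F4.L b)) (h * g)) :
    (QuotientGroup.mk' (F4.L b)) g ∈ Subgroup.center (F4 ⧸ F4.L b) := by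
  rw [Subgroup.mem_center_iff]
  intro q
  induction q using QuotientGroup.induction_on with
  | H h =>
    show (QuotientGroup.mk' (F4.L b)) h * (QuotientGroup.mk' (F4.L b)) g =
      (QuotientGroup.mk' (F4.L b)) g * (QuotientGroup.mk' (F4.L b)) h
    rw [← map_mul, ← map_mul]
    exact (H h).symm

lemma Z2_central_K :
    (QuotientGroup.mk' (F4.L b)) F4.Z2 ∈ Subgroup.center (F4 ⧸ F4.L b) := by
  refine mk_mem_center_of b _ (fun h => ?_)
  rw [← F4.Z2_central h]

/-- the w element: `X^(2^(b+1)) * (Z^(2^b))⁻¹`. -/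
def wF : F4 := ⟨2 * 2 ^ b, 0, -(2 ^ b : ℤ), 0⟩

lemma wF_eq : F4.X ^ (2 ^ (b+1) : ℕ) * (F4.Z ^ (2 ^ b : ℕ))⁻¹ = wF b := by
  rw [F4.X_pow, F4.Z_pow]
  ext <;> simp [wF, C2_zero] <;> push_cast [pow_succ] <;> ring

lemma wF_central :
    (QuotientGroup.mk' (F4.L b)) (wF b) ∈ Subgroup.center (F4 ⧸ F4.L b) := by
  refine mk_mem_center_of b _ (fun h => ?_)
  have hδ : wF b * h = (h * wF b) * ⟨0, 0, 2 * 2 ^ b * h.j, 2 * 2 ^ b * C2 h.j - 2 ^ b * h.j⟩ := by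
    ext <;> simp [wF, C2_zero] <;> ring
  have hmem : (⟨0, 0, 2 * 2 ^ b * h.j, 2 * 2 ^ b * C2 h.j - 2 ^ b * h.j⟩ : F4) ∈ F4.L b :=
    ⟨0, 0, h.j, C2 h.j, by simp, by simp, by simp, by simp⟩
  have h1 : (QuotientGroup.mk' (F4.L b)) (⟨0, 0, 2 * 2 ^ b * h.j,
      2 * 2 ^ b * C2 h.j - 2 ^ b * h.j⟩ : F4) = 1 := (QuotientGroup.eq_one_iff _).2 hmem
  rw [hδ, map_mul, h1, mul_one]

/-- relator checks for the map `PP →* K ⧸ Z(K)`. -/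
lemma cap_rels : ∀ r ∈ relsII (b + 2) (b + 1) (b + 1) b,
    FreeGroup.lift (fun i : Fin 2 => if i = 0 then piK b F4.X else piK b F4.Y) r = 1 := by
  intro r hr
  set f : Fin 2 → ((F4 ⧸ F4.L b) ⧸ Subgroup.center (F4 ⧸ F4.L b)) :=
    fun i => if i = 0 then piK b F4.X else piK b F4.Y with hf
  have hf0 : f 0 = piK b F4.X := by simp [hf]
  have hf1 : f 1 = piK b F4.Y := by simp [hf]
  have hLone : ∀ u : F4, u ∈ F4.L b → piK b u = 1 := by
    intro u hu
    have : (QuotientGroup.mk' (F4.L b)) u = 1 := (QuotientGroup.eq_one_iff _).2 hu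
    show (QuotientGroup.mk' _) ((QuotientGroup.mk' (F4.L b)) u) = 1
    rw [this, map_one]
  rcases hr with rfl | rfl | rfl | rfl | rfl
  · rw [map_pow, FreeGroup.lift_apply_of, hf0, ← map_pow, F4.X_pow]
    refine hLone _ ⟨1, 0, 0, 0, ?_, by simp, by simp, by simp⟩
    push_cast [pow_add]
    ring
  · rw [map_pow, FreeGroup.lift_apply_of, hf1, ← map_pow, F4.Y_pow]
    refine hLone _ ⟨0, 1, 0, 0, by simp, ?_, by simp, by simp⟩
    push_cast [pow_add]
    ring
  · rw [map_pcomm, map_pcomm, FreeGroup.lift_apply_of, FreeGroup.lift_apply_of, hf0, hf1,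
      ← map_pcomm, ← map_pcomm, F4.pcomm_XY, F4.pcomm_ZX, map_one]
  · rw [map_pcomm, map_pcomm, FreeGroup.lift_apply_of, FreeGroup.lift_apply_of, hf0, hf1,
      ← map_pcomm, ← map_pcomm, F4.pcomm_XY, F4.pcomm_ZY]
    exact (QuotientGroup.eq_one_iff _).2 (Z2_central_K b)
  · rw [map_mul, map_inv, map_pow, map_pow, map_pcomm, FreeGroup.lift_apply_of,
      FreeGroup.lift_apply_of, hf0, hf1, ← map_pcomm, F4.pcomm_XY, ← map_pow, ← map_pow,
      ← map_inv, ← map_mul]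
    have he : (b + 2) + b - (b + 1) = b + 1 := by omega
    rw [he, wF_eq]
    exact (QuotientGroup.eq_one_iff _).2 (wF_central b)

noncomputable def Phi2 : PP →* ((F4 ⧸ F4.L b) ⧸ Subgroup.center (F4 ⧸ F4.L b)) :=
  PresentedGroup.toGroup (cap_rels b)

lemma Phi2_aa : Phi2 b (aa b) = piK b F4.X := by
  rw [aa, Phi2, PresentedGroup.toGroup.of]
  simp

lemma Phi2_bb : Phi2 b (bb b) = piK b F4.Y := by
  rw [bb, Phi2, PresentedGroup.toGroup.of]
  simp

lemma K2_closure_top : Subgroup.closure ({piK b F4.X, piK b F4.Y} :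
    Set ((F4 ⧸ F4.L b) ⧸ Subgroup.center (F4 ⧸ F4.L b))) = ⊤ := by
  have himg : (piK b) '' ({F4.X, F4.Y} : Set F4) = {piK b F4.X, piK b F4.Y} := by
    rw [Set.image_insert_eq, Set.image_singleton]
  rw [← himg, ← MonoidHom.map_closure, F4.closure_top]
  rw [← MonoidHom.range_eq_map]
  exact MonoidHom.range_eq_top.2 (piK_surj b)

lemma comp_PhiPsi : (Phi2 b).comp (Psi2 b) = MonoidHom.id _ := by
  refine MonoidHom.eq_of_eqOn_dense (K2_closure_top b) ?_
  rintro u (rfl | rfl)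
  · simp only [MonoidHom.coe_comp, Function.comp_apply, MonoidHom.id_apply]
    rw [Psi2_piK, psi_X, Phi2_aa]
  · simp only [MonoidHom.coe_comp, Function.comp_apply, MonoidHom.id_apply]
    rw [Psi2_piK, psi_Y, Phi2_bb]

lemma comp_PsiPhi : (Psi2 b).comp (Phi2 b) = MonoidHom.id _ := by
  refine PresentedGroup.ext (fun i => ?_)
  fin_cases i
  · show (Psi2 b) ((Phi2 b) (aa b)) = aa b
    rw [Phi2_aa, Psi2_piK, psi_X]
  · show (Psi2 b) ((Phi2 b) (bb b)) = bb b
    rw [Phi2_bb, Psi2_piK, psi_Y]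

lemma capable_case : IsCapable (PresentedGroup (relsII (b + 2) (b + 1) (b + 1) b)) := by
  refine ⟨F4 ⧸ F4.L b, inferInstance, ⟨?_⟩⟩
  exact
    { toFun := Psi2 b
      invFun := Phi2 b
      left_inv := fun q => DFunLike.congr_fun (comp_PhiPsi b) q
      right_inv := fun p => DFunLike.congr_fun (comp_PsiPhi b) p
      map_mul' := (Psi2 b).map_mul }

end Cap

end Capable

end CapProof

/-- A general type group with `β ≥ γ > σ ≥ 0`, `α + σ ≥ 2γ`, `α + β + σ > 3`,
and `γ = β` is capable if and only if `α = β + 1` and `σ = β - 1`. -/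
theorem general_type_gamma_eq_beta_capable_iff (α β γ σ : ℕ)
    (hσγ : σ < γ) (hγβ : γ ≤ β) (h2γ : 2 * γ ≤ α + σ)
    (hsum : 3 < α + β + σ) (hγeqβ : γ = β) :
    IsCapable (PresentedGroup (relsII α β γ σ)) ↔ (α = β + 1 ∧ σ = β - 1) := by
  constructor
  · intro hcap
    by_cases h1 : α = β + 1
    · by_cases h2 : σ = β - 1
      · exact ⟨h1, h2⟩
      · exfalso
        omega
    · exfalso
      have hα : β + 2 ≤ α := by omega
      exact CapProof.not_capable α β γ σ hσγ hγβ h2γ hγeqβ hα hcap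
  · rintro ⟨hα, hσ⟩
    obtain ⟨b, rfl⟩ : ∃ b, β = b + 1 := ⟨β - 1, by omega⟩
    obtain rfl : γ = b + 1 := by omega
    obtain rfl : α = b + 2 := by omega
    have hσb : σ = b := by omega
    rw [hσb]
    exact CapProof.Cap.capable_case b
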